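/- Let V ∈ R^{p×r} have at most s nonzero rows with V ≠ 0, let W ∈ R^{p×r} with W ≠ 0, let s ≤ s' ≤ p, and let W̄ = HT(W, s'). Set X = ‖V‖_F, Y = ‖W‖_F, and Δ = ‖V^T W‖_* (the nuclear norm, i.e., the sum of singular values, of V^T W). Then ‖V^T W‖_* − ‖V^T W̄‖_* ≤ √(s/s') · min( √(X² Y² − Δ²) , ((1 + √(s/s')) / (X Y)) · (X² Y² − Δ²) ). -/

import Mathlib

open MeasureTheory ProbabilityTheory Matrix Real
open scoped Classical

noncomputable section

/-- Frobenius norm of a real matrix. -/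
def frob {m n : ℕ} (M : Matrix (Fin m) (Fin n) ℝ) : ℝ :=
  Real.sqrt (∑ i, ∑ j, (M i j) ^ 2)

/-- Distance between `p × r` matrices modulo right multiplication by an orthogonal matrix:
`dist(U,V) = min_{P ∈ O(r)} ‖U P - V‖_F`. -/
def gdist {p r : ℕ} (U V : Matrix (Fin p) (Fin r) ℝ) : ℝ :=
  sInf {x : ℝ | ∃ P : Matrix (Fin r) (Fin r) ℝ, Pᵀ * P = 1 ∧ x = frob (U * P - V)}

/-- The positive semidefinite square root, as `Matrix.PosSemidef.sqrt` was defined in the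
older Mathlib (removed since). -/
def posSemidefSqrt {m : ℕ} {S : Matrix (Fin m) (Fin m) ℝ} (hS : S.PosSemidef) :
    Matrix (Fin m) (Fin m) ℝ :=
  hS.1.eigenvectorUnitary.1 * diagonal ((↑) ∘ (√·) ∘ hS.1.eigenvalues) *
  (star hS.1.eigenvectorUnitary : Matrix (Fin m) (Fin m) ℝ)

/-- Centered multivariate Gaussian with covariance `S`, as the law of `S^{1/2} z` for a
standard Gaussian vector `z`. -/
def mvGaussian {m : ℕ} (S : Matrix (Fin m) (Fin m) ℝ) : Measure (Fin m → ℝ) :=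
  if h : S.PosSemidef then
    (Measure.pi fun _ : Fin m => gaussianReal 0 1).map fun z => (posSemidefSqrt h).mulVec z
  else 0

/-- Law of `n` i.i.d. samples from `N_m(0, S)`. -/
def iidLaw (n : ℕ) {m : ℕ} (S : Matrix (Fin m) (Fin m) ℝ) : Measure (Fin n → Fin m → ℝ) :=
  Measure.pi fun _ : Fin n => mvGaussian S

def sampleMean {n m : ℕ} (X : Fin n → Fin m → ℝ) (i : Fin m) : ℝ := (∑ t, X t i) / n

/-- Sample covariance matrix. -/
def sampleCov {n m : ℕ} (X : Fin n → Fin m → ℝ) : Matrix (Fin m) (Fin m) ℝ :=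
  Matrix.of fun i j => (∑ t, (X t i - sampleMean X i) * (X t j - sampleMean X j)) / n

/-- Block-diagonal part of a matrix with respect to block labels `β`. -/
def blockPart {m k : ℕ} (β : Fin m → Fin k) (M : Matrix (Fin m) (Fin m) ℝ) :
    Matrix (Fin m) (Fin m) ℝ :=
  Matrix.of fun i j => if β i = β j then M i j else 0

/-- Rows of `M` belonging to block `i`, all other rows zeroed out. -/
def restrictRows {m k c : ℕ} (β : Fin m → Fin k) (i : Fin k) (M : Matrix (Fin m) (Fin c) ℝ) :
    Matrix (Fin m) (Fin c) ℝ :=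
  Matrix.of fun a b => if β a = i then M a b else 0

/-- ℓ₂ norm of row `i` of `M`. -/
def rowNorm {m r : ℕ} (M : Matrix (Fin m) (Fin r) ℝ) (i : Fin m) : ℝ :=
  Real.sqrt (∑ j, (M i j) ^ 2)

/-- Set of indices of nonzero rows. -/
def rowSupport {m r : ℕ} (M : Matrix (Fin m) (Fin r) ℝ) : Set (Fin m) := {i | M i ≠ 0}

/-- `W'` is the hard thresholding of `W` keeping the `k` rows of largest ℓ₂ norm
(ties broken toward smaller indices). -/
def IsHT {m r : ℕ} (W : Matrix (Fin m) (Fin r) ℝ) (k : ℕ) (W' : Matrix (Fin m) (Fin r) ℝ) : Prop :=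
  ∃ C : Finset (Fin m), C.card = min k m ∧ (∀ i ∈ C, W' i = W i) ∧ (∀ i ∉ C, W' i = 0) ∧
    ∀ i ∈ C, ∀ j ∉ C, rowNorm W j < rowNorm W i ∨ (rowNorm W j = rowNorm W i ∧ i < j)

/-- Positive semidefinite square root (junk value `0` if not psd). -/
def psqrt {r : ℕ} (M : Matrix (Fin r) (Fin r) ℝ) : Matrix (Fin r) (Fin r) ℝ :=
  if h : M.PosSemidef then posSemidefSqrt h else 0

/-- Inverse square root. -/
def invSqrt {r : ℕ} (M : Matrix (Fin r) (Fin r) ℝ) : Matrix (Fin r) (Fin r) ℝ := (psqrt M)⁻¹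

/-- Nuclear norm `Tr √(Mᵀ M)`. -/
def nucNorm {a b : ℕ} (M : Matrix (Fin a) (Fin b) ℝ) : ℝ := (psqrt (Mᵀ * M)).trace

/-- Entrywise ℓ₁ norm. -/
def l1Norm {a b : ℕ} (M : Matrix (Fin a) (Fin b) ℝ) : ℝ := ∑ i, ∑ j, |M i j|

/-- Entrywise sup norm. -/
def maxAbs {a b : ℕ} (M : Matrix (Fin a) (Fin b) ℝ) : ℝ := sSup {x : ℝ | ∃ i j, x = |M i j|}

/-- Membership in the Fantope `{X : 0 ⪯ X ⪯ I, Tr X = r}`. -/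
def InFantope {p : ℕ} (r : ℕ) (X : Matrix (Fin p) (Fin p) ℝ) : Prop :=
  X.PosSemidef ∧ (1 - X).PosSemidef ∧ X.trace = (r : ℝ)

/-- `F` minimizes `-⟨Sh, ·⟩ + ρ ‖·‖_1` over symmetric matrices whose conjugation by
`S0h^{1/2}` lies in the Fantope. -/
def IsFantopeMin {p : ℕ} (r : ℕ) (Sh S0h : Matrix (Fin p) (Fin p) ℝ) (ρ : ℝ)
    (F : Matrix (Fin p) (Fin p) ℝ) : Prop :=
  F.IsSymm ∧ InFantope r (psqrt S0h * F * psqrt S0h) ∧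
    ∀ G : Matrix (Fin p) (Fin p) ℝ, G.IsSymm → InFantope r (psqrt S0h * G * psqrt S0h) →
      -(Shᵀ * F).trace + ρ * l1Norm F ≤ -(Shᵀ * G).trace + ρ * l1Norm G

/-- `L` maximizes `⟨Sh, L Lᵀ⟩` subject to `Lᵀ S0h L = I_r` and row support inside `I`. -/
def IsRestrictedMax {p r : ℕ} (Sh S0h : Matrix (Fin p) (Fin p) ℝ) (I : Finset (Fin p))
    (L : Matrix (Fin p) (Fin r) ℝ) : Prop :=
  Lᵀ * S0h * L = 1 ∧ (∀ i ∉ I, L i = 0) ∧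
    ∀ L' : Matrix (Fin p) (Fin r) ℝ, L'ᵀ * S0h * L' = 1 → (∀ i ∉ I, L' i = 0) →
      (Shᵀ * (L' * L'ᵀ)).trace ≤ (Shᵀ * (L * Lᵀ)).trace

/-- Kullback–Leibler divergence `∫ log (dP/dQ) dP`. -/
def klDivR {α : Type*} [MeasurableSpace α] (P Q : Measure α) : ℝ :=
  ∫ x, Real.log (P.rnDeriv Q x).toReal ∂P


-- AUXILIARY LEMMAS
lemma posSemidefSqrt_posSemidef {m : ℕ} {S : Matrix (Fin m) (Fin m) ℝ} (hS : S.PosSemidef) :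
    (posSemidefSqrt hS).PosSemidef := by
  unfold posSemidefSqrt
  have hD : (diagonal (((↑) ∘ (√·) ∘ hS.1.eigenvalues) : Fin m → ℝ)).PosSemidef :=
    Matrix.posSemidef_diagonal_iff.mpr fun i => by simp [Real.sqrt_nonneg]
  have := hD.mul_mul_conjTranspose_same (hS.1.eigenvectorUnitary.1)
  simpa [star_eq_conjTranspose] using this
lemma posSemidefSqrt_mul_self {m : ℕ} {S : Matrix (Fin m) (Fin m) ℝ} (hS : S.PosSemidef) :
    posSemidefSqrt hS * posSemidefSqrt hS = S := by
  unfold posSemidefSqrt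
  have hU : (star hS.1.eigenvectorUnitary : Matrix (Fin m) (Fin m) ℝ) * hS.1.eigenvectorUnitary.1 = 1 :=
    Matrix.mem_unitaryGroup_iff'.mp hS.1.eigenvectorUnitary.2
  have hspec := hS.1.spectral_theorem
  conv_rhs => rw [hspec]
  rw [Unitary.conjStarAlgAut_apply]
  have e : (hS.1.eigenvectorUnitary.1 * diagonal (((↑) ∘ (√·) ∘ hS.1.eigenvalues) : Fin m → ℝ) *
      (star hS.1.eigenvectorUnitary : Matrix (Fin m) (Fin m) ℝ)) *
      (hS.1.eigenvectorUnitary.1 * diagonal (((↑) ∘ (√·) ∘ hS.1.eigenvalues) : Fin m → ℝ) *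
      (star hS.1.eigenvectorUnitary : Matrix (Fin m) (Fin m) ℝ))
      = hS.1.eigenvectorUnitary.1 * (diagonal (((↑) ∘ (√·) ∘ hS.1.eigenvalues) : Fin m → ℝ) *
      (((star hS.1.eigenvectorUnitary : Matrix (Fin m) (Fin m) ℝ) * hS.1.eigenvectorUnitary.1) *
      diagonal (((↑) ∘ (√·) ∘ hS.1.eigenvalues) : Fin m → ℝ))) *
      (star hS.1.eigenvectorUnitary : Matrix (Fin m) (Fin m) ℝ) := by
    simp only [Matrix.mul_assoc]
  rw [e, hU, Matrix.one_mul, diagonal_mul_diagonal]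
  congr 3
  funext i
  simp [Real.mul_self_sqrt (hS.eigenvalues_nonneg i)]
lemma exists_polar {r : ℕ} (A : Matrix (Fin r) (Fin r) ℝ) :
    ∃ U : Matrix (Fin r) (Fin r) ℝ, Uᵀ * U = 1 ∧ U * Uᵀ = 1 ∧ U * psqrt (Aᵀ * A) = A := by
  have hS : (Aᵀ * A).PosSemidef := by
    simpa using Matrix.posSemidef_conjTranspose_mul_self A
  have hpsq : psqrt (Aᵀ * A) = posSemidefSqrt hS := by rw [psqrt, dif_pos]
  set H : Matrix (Fin r) (Fin r) ℝ := posSemidefSqrt hS with hHdef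
  have hH : H.PosSemidef := posSemidefSqrt_posSemidef hS
  have hHH : H * H = Aᵀ * A := posSemidefSqrt_mul_self hS
  have hHerm : H.IsHermitian := hH.1
  set V : Matrix (Fin r) (Fin r) ℝ := (hHerm.eigenvectorUnitary : Matrix (Fin r) (Fin r) ℝ) with hVdef
  set μ : Fin r → ℝ := hHerm.eigenvalues with hmu
  have hμ0 : ∀ i, 0 ≤ μ i := fun i => hH.eigenvalues_nonneg i
  have hV1 : Vᵀ * V = 1 := by
    have := (Matrix.mem_unitaryGroup_iff'.mp hHerm.eigenvectorUnitary.2)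
    simpa [star_eq_conjTranspose] using this
  have hV2 : V * Vᵀ = 1 := by
    have := (Matrix.mem_unitaryGroup_iff.mp hHerm.eigenvectorUnitary.2)
    simpa [star_eq_conjTranspose] using this
  have hspec : H = V * diagonal μ * Vᵀ := by
    have := hHerm.spectral_theorem
    simpa [star_eq_conjTranspose] using this
  set C : Matrix (Fin r) (Fin r) ℝ := A * V with hCdef
  have hCtC : Cᵀ * C = diagonal (fun i => μ i ^ 2) := by
    have h1 : Cᵀ * C = Vᵀ * (Aᵀ * A * V) := by
      rw [hCdef, transpose_mul]; simp only [Matrix.mul_assoc]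
    rw [h1, ← hHH, hspec]
    have h2 : V * diagonal μ * Vᵀ * (V * diagonal μ * Vᵀ) * V
        = V * (diagonal μ * ((Vᵀ * V) * (diagonal μ * (Vᵀ * V)))) := by
      simp only [Matrix.mul_assoc]
    rw [h2, hV1, Matrix.one_mul, Matrix.mul_one]
    have h3 : Vᵀ * (V * (diagonal μ * diagonal μ)) = (Vᵀ * V) * (diagonal μ * diagonal μ) := by
      simp only [Matrix.mul_assoc]
    rw [h3, hV1, Matrix.one_mul, diagonal_mul_diagonal]
    congr 1; funext i; ring
  have hcol : ∀ i j, (∑ k, C k i * C k j) = if i = j then μ i ^ 2 else 0 := by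
    intro i j
    have := congrFun (congrFun hCtC i) j
    simpa [Matrix.mul_apply, transpose_apply, diagonal_apply] using this
  -- orthonormal family
  set v : Fin r → EuclideanSpace ℝ (Fin r) := fun i => (μ i)⁻¹ • (WithLp.toLp 2 (fun k => C k i)) with hvdef
  have hvon : Orthonormal ℝ (Set.restrict {i | μ i ≠ 0} v) := by
    rw [orthonormal_iff_ite]
    intro ⟨i, hi⟩ ⟨j, hj⟩
    change (inner ℝ (v i) (v j) : ℝ) = _
    have key : (inner ℝ (v i) (v j) : ℝ) = (μ i)⁻¹ * (μ j)⁻¹ * (∑ k, C k i * C k j) := by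
      simp only [hvdef, PiLp.inner_apply, RCLike.inner_apply, starRingEnd_apply, star_trivial,
        Finset.mul_sum]
      apply Finset.sum_congr rfl; intro k _
      simp only [PiLp.smul_apply, Pi.smul_apply, smul_eq_mul]
      ring
    rw [key, hcol i j]
    have hine : μ i ≠ 0 := hi
    have hjne : μ j ≠ 0 := hj
    by_cases hij : i = j
    · subst hij
      simp only [Subtype.mk.injEq, if_pos rfl, if_true]
      rw [pow_two]
      field_simp
    · have hne : (⟨i, hi⟩ : {i | μ i ≠ 0}) ≠ ⟨j, hj⟩ := by simp [hij]
      simp [hij, hne]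
  have hcard : Module.finrank ℝ (EuclideanSpace ℝ (Fin r)) = Fintype.card (Fin r) := by
    simp [finrank_euclideanSpace]
  obtain ⟨b, hb⟩ := hvon.exists_orthonormalBasis_extension_of_card_eq hcard
  set Wm : Matrix (Fin r) (Fin r) ℝ := Matrix.of (fun k j => b j k) with hWmdef
  have hWmOn : Wmᵀ * Wm = 1 := by
    ext i j
    have hbij := (orthonormal_iff_ite.mp b.orthonormal) i j
    simp only [PiLp.inner_apply, RCLike.inner_apply, starRingEnd_apply, star_trivial] at hbij
    simp only [Matrix.mul_apply, transpose_apply, hWmdef, Matrix.of_apply, Matrix.one_apply]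
    rw [← hbij]
    exact Finset.sum_congr rfl fun _ _ => mul_comm _ _
  have hWD : Wm * diagonal μ = C := by
    ext k j
    simp only [Matrix.mul_apply, diagonal_apply, hWmdef, Matrix.of_apply, mul_ite, mul_zero]
    rw [Finset.sum_ite_eq' Finset.univ j (fun m => b m k * μ m)]
    simp only [Finset.mem_univ, if_pos]
    by_cases hj : μ j = 0
    · have hzero : C k j = 0 := by
        have h3 := hcol j j
        rw [if_pos rfl, hj] at h3
        have h4 : (∑ m, C m j ^ 2) = 0 := by
          calc (∑ m, C m j ^ 2) = ∑ m, C m j * C m j := by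
                apply Finset.sum_congr rfl; intro m _; ring
            _ = 0 := by rw [h3]; norm_num
        have h5 := (Finset.sum_eq_zero_iff_of_nonneg (fun m _ => sq_nonneg (C m j))).mp h4 k
          (Finset.mem_univ k)
        exact pow_eq_zero_iff (n := 2) (by norm_num) |>.mp h5
      rw [hj, hzero, mul_zero]
    · have hbj : b j = v j := hb j hj
      rw [hbj]
      simp only [hvdef, PiLp.smul_apply, smul_eq_mul]
      field_simp
  refine ⟨Wm * Vᵀ, ?_, ?_, ?_⟩
  · have h4 : (Wm * Vᵀ)ᵀ * (Wm * Vᵀ) = V * ((Wmᵀ * Wm) * Vᵀ) := by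
      simp only [transpose_mul, transpose_transpose, Matrix.mul_assoc]
    rw [h4, hWmOn, Matrix.one_mul, hV2]
  · have hWm2 : Wm * Wmᵀ = 1 := mul_eq_one_comm.mp hWmOn
    have h4 : (Wm * Vᵀ) * (Wm * Vᵀ)ᵀ = Wm * ((Vᵀ * V) * Wmᵀ) := by
      simp only [transpose_mul, transpose_transpose, Matrix.mul_assoc]
    rw [h4, hV1, Matrix.one_mul, hWm2]
  · rw [hpsq, hspec]
    have h4 : Wm * Vᵀ * (V * diagonal μ * Vᵀ) = Wm * ((Vᵀ * V) * (diagonal μ * Vᵀ)) := by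
      simp only [Matrix.mul_assoc]
    rw [h4, hV1, Matrix.one_mul, ← Matrix.mul_assoc, hWD, hCdef, Matrix.mul_assoc, hV2,
      Matrix.mul_one]

lemma psd_diag_nonneg {r : ℕ} {M : Matrix (Fin r) (Fin r) ℝ} (hM : M.PosSemidef) (i : Fin r) :
    0 ≤ M i i := by
  exact hM.diag_nonneg

lemma psd_trace_nonneg {r : ℕ} {M : Matrix (Fin r) (Fin r) ℝ} (hM : M.PosSemidef) :
    0 ≤ M.trace := by
  rw [Matrix.trace]
  exact Finset.sum_nonneg fun i _ => psd_diag_nonneg hM i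

lemma psqrt_posSemidef {r : ℕ} (M : Matrix (Fin r) (Fin r) ℝ) : (psqrt M).PosSemidef := by
  rw [psqrt]
  split_ifs with h
  · exact posSemidefSqrt_posSemidef h
  · exact Matrix.PosSemidef.zero

lemma nucNorm_nonneg {a b : ℕ} (M : Matrix (Fin a) (Fin b) ℝ) : 0 ≤ nucNorm M :=
  psd_trace_nonneg (psqrt_posSemidef _)

lemma traceTmul {a b : ℕ} (X Y : Matrix (Fin a) (Fin b) ℝ) :
    (Xᵀ * Y).trace = ∑ i, ∑ j, X i j * Y i j := by
  rw [Matrix.trace]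
  simp only [Matrix.diag_apply, Matrix.mul_apply, transpose_apply]
  rw [Finset.sum_comm]

lemma frobCS {a b : ℕ} (T : Finset (Fin a)) (X Y : Matrix (Fin a) (Fin b) ℝ) :
    ∑ i ∈ T, ∑ j, X i j * Y i j ≤
      Real.sqrt (∑ i ∈ T, ∑ j, X i j ^ 2) * Real.sqrt (∑ i ∈ T, ∑ j, Y i j ^ 2) := by
  have h1 : ∀ Z : Matrix (Fin a) (Fin b) ℝ, ∀ g : ℝ → ℝ,
      (∑ i ∈ T, ∑ j, g (Z i j)) = ∑ x ∈ T ×ˢ Finset.univ, g (Z x.1 x.2) := by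
    intro Z g; rw [Finset.sum_product]
  have hCS := Finset.sum_mul_sq_le_sq_mul_sq (T ×ˢ Finset.univ)
    (fun x => X x.1 x.2) (fun x => Y x.1 x.2)
  have h2 : (∑ i ∈ T, ∑ j, X i j * Y i j) = ∑ x ∈ T ×ˢ Finset.univ, X x.1 x.2 * Y x.1 x.2 := by
    rw [Finset.sum_product]
  rw [h2, h1 X (fun t => t ^ 2), h1 Y (fun t => t ^ 2)]
  set z := ∑ x ∈ T ×ˢ Finset.univ, X x.1 x.2 * Y x.1 x.2 with hz
  have hXn : (0:ℝ) ≤ ∑ x ∈ T ×ˢ Finset.univ, X x.1 x.2 ^ 2 :=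
    Finset.sum_nonneg fun x _ => sq_nonneg _
  have hYn : (0:ℝ) ≤ ∑ x ∈ T ×ˢ Finset.univ, Y x.1 x.2 ^ 2 :=
    Finset.sum_nonneg fun x _ => sq_nonneg _
  calc z ≤ |z| := le_abs_self z
    _ = Real.sqrt (z ^ 2) := (Real.sqrt_sq_eq_abs z).symm
    _ ≤ Real.sqrt ((∑ x ∈ T ×ˢ Finset.univ, X x.1 x.2 ^ 2) *
        (∑ x ∈ T ×ˢ Finset.univ, Y x.1 x.2 ^ 2)) := Real.sqrt_le_sqrt hCS
    _ = _ := Real.sqrt_mul hXn _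

lemma trace_orth_le_nucNorm {r : ℕ} (B Q : Matrix (Fin r) (Fin r) ℝ) (hQ : Qᵀ * Q = 1) :
    (Qᵀ * B).trace ≤ nucNorm B := by
  obtain ⟨U, hU1, hU2, hUH⟩ := exists_polar B
  have hSpsd : (Bᵀ * B).PosSemidef := by simpa using Matrix.posSemidef_conjTranspose_mul_self B
  have hH : (psqrt (Bᵀ * B)).PosSemidef := psqrt_posSemidef _
  set H : Matrix (Fin r) (Fin r) ℝ := psqrt (Bᵀ * B) with hHdef
  set K : Matrix (Fin r) (Fin r) ℝ := posSemidefSqrt hH with hKdef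
  have hK : K.PosSemidef := posSemidefSqrt_posSemidef hH
  have hKK : K * K = H := posSemidefSqrt_mul_self hH
  have hKsym : Kᵀ = K := by
    have := hK.1
    rw [Matrix.IsHermitian] at this
    simpa using this
  have hQQ : Q * Qᵀ = 1 := mul_eq_one_comm.mp hQ
  have hRR : (Uᵀ * Q) * (Uᵀ * Q)ᵀ = 1 := by
    have e1 : (Uᵀ * Q) * (Uᵀ * Q)ᵀ = Uᵀ * ((Q * Qᵀ) * U) := by
      simp only [transpose_mul, transpose_transpose, Matrix.mul_assoc]
    rw [e1, hQQ, Matrix.one_mul, hU1]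
  have e2 : (Qᵀ * B).trace = ((K * (Uᵀ * Q))ᵀ * K).trace := by
    have : (K * (Uᵀ * Q))ᵀ * K = (Uᵀ * Q)ᵀ * (K * K) := by
      simp only [transpose_mul, hKsym, Matrix.mul_assoc]
    rw [this, hKK]
    have : (Uᵀ * Q)ᵀ * H = Qᵀ * (U * H) := by
      simp only [transpose_mul, transpose_transpose, Matrix.mul_assoc]
    rw [this, hUH]
  have e3 : (∑ i, ∑ j, (K * (Uᵀ * Q)) i j ^ 2) = H.trace := by
    have h4 : (∑ i, ∑ j, (K * (Uᵀ * Q)) i j ^ 2)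
        = ((K * (Uᵀ * Q))ᵀ * (K * (Uᵀ * Q))).trace := by
      rw [traceTmul]
      apply Finset.sum_congr rfl; intro i _
      apply Finset.sum_congr rfl; intro j _; ring
    rw [h4]
    have h5 : (K * (Uᵀ * Q))ᵀ * (K * (Uᵀ * Q)) = (Uᵀ * Q)ᵀ * (H * (Uᵀ * Q)) := by
      have : (K * (Uᵀ * Q))ᵀ * (K * (Uᵀ * Q)) = (Uᵀ * Q)ᵀ * ((K * K) * (Uᵀ * Q)) := by
        simp only [transpose_mul, hKsym, Matrix.mul_assoc]
      rw [this, hKK]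
    rw [h5, Matrix.trace_mul_comm, Matrix.mul_assoc, hRR, Matrix.mul_one]
  have e4 : (∑ i, ∑ j, K i j ^ 2) = H.trace := by
    have h4 : (∑ i, ∑ j, K i j ^ 2) = (Kᵀ * K).trace := by
      rw [traceTmul]
      apply Finset.sum_congr rfl; intro i _
      apply Finset.sum_congr rfl; intro j _; ring
    rw [h4, hKsym, hKK]
  have htr0 : 0 ≤ H.trace := psd_trace_nonneg hH
  calc (Qᵀ * B).trace = ∑ i, ∑ j, (K * (Uᵀ * Q)) i j * K i j := by
        rw [e2, traceTmul]
    _ ≤ Real.sqrt (∑ i, ∑ j, (K * (Uᵀ * Q)) i j ^ 2) * Real.sqrt (∑ i, ∑ j, K i j ^ 2) :=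
        frobCS Finset.univ _ _
    _ = Real.sqrt H.trace * Real.sqrt H.trace := by rw [e3, e4]
    _ = H.trace := Real.mul_self_sqrt htr0
    _ = nucNorm B := rfl

lemma exists_dual_attain {r : ℕ} (A : Matrix (Fin r) (Fin r) ℝ) :
    ∃ Q : Matrix (Fin r) (Fin r) ℝ, Qᵀ * Q = 1 ∧ Q * Qᵀ = 1 ∧ (Qᵀ * A).trace = nucNorm A := by
  obtain ⟨U, hU1, hU2, hUH⟩ := exists_polar A
  refine ⟨U, hU1, hU2, ?_⟩
  rw [nucNorm]
  conv_lhs => rw [← hUH]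
  rw [← Matrix.mul_assoc, hU1, Matrix.one_mul]

set_option maxHeartbeats 1000000 in
lemma scalar_main (x y d t e g d1 d2 : ℝ) (hx : 0 < x) (hy : 0 < y)
    (he0 : 0 < e) (he1 : e ≤ 1) (hd0 : 0 ≤ d) (hdxy : d ≤ x * y)
    (hg0 : 0 ≤ g) (hd10 : 0 ≤ d1) (hd20 : 0 ≤ d2)
    (ht1 : t ≤ x / y * (g ^ 2 + d1 * g)) (ht2 : t ≤ d)
    (hgd2 : g ≤ e * d2) (hsum : d1 ^ 2 + d2 ^ 2 ≤ 2 * y ^ 2 - 2 * y * d / x) :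
    t ≤ e * Real.sqrt (x ^ 2 * y ^ 2 - d ^ 2) ∧
      t ≤ e * ((1 + e) / (x * y) * (x ^ 2 * y ^ 2 - d ^ 2)) := by
  have hxy : 0 < x * y := mul_pos hx hy
  set w : ℝ := Real.sqrt (1 + e ^ 2) with hwdef
  have hw2 : w ^ 2 = 1 + e ^ 2 := Real.sq_sqrt (by positivity)
  have hw0 : 0 ≤ w := Real.sqrt_nonneg _
  clear_value w
  have hw1 : 1 ≤ w := by nlinarith
  have hwe : e < w := by nlinarith
  have hew : 0 < e + w := by nlinarith
  -- Step 1 : t ≤ e * (e + w) * (x * y - d)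
  have step1 : t ≤ e * (e + w) * (x * y - d) := by
    have h1 : g ^ 2 + d1 * g ≤ e ^ 2 * d2 ^ 2 + e * d1 * d2 := by
      have i1 : g ^ 2 ≤ (e * d2) ^ 2 := by nlinarith
      have i2 : d1 * g ≤ d1 * (e * d2) := by nlinarith
      nlinarith
    have key2 : 2 * (e + w) * (e * (e + w) / 2 * (d1 ^ 2 + d2 ^ 2) - (e ^ 2 * d2 ^ 2 + e * d1 * d2))
        = e * ((e + w) * d1 - d2) ^ 2 := by
      linear_combination e * d2 ^ 2 * hw2
    have h2 : e ^ 2 * d2 ^ 2 + e * d1 * d2 ≤ e * (e + w) / 2 * (d1 ^ 2 + d2 ^ 2) := by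
      nlinarith [key2, mul_nonneg he0.le (sq_nonneg ((e + w) * d1 - d2)), hew]
    have h3 : x / y * (g ^ 2 + d1 * g) ≤
        x / y * (e * (e + w) / 2 * (2 * y ^ 2 - 2 * y * d / x)) := by
      apply mul_le_mul_of_nonneg_left _ (by positivity)
      calc g ^ 2 + d1 * g ≤ e ^ 2 * d2 ^ 2 + e * d1 * d2 := h1
        _ ≤ e * (e + w) / 2 * (d1 ^ 2 + d2 ^ 2) := h2
        _ ≤ e * (e + w) / 2 * (2 * y ^ 2 - 2 * y * d / x) := by
            apply mul_le_mul_of_nonneg_left hsum (by positivity)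
    have h4 : x / y * (e * (e + w) / 2 * (2 * y ^ 2 - 2 * y * d / x))
        = e * (e + w) * (x * y - d) := by
      field_simp
    linarith [ht1, h3, h4.le]
  clear ht1 hsum hgd2 hg0 hd10 hd20
  constructor
  · -- branch 1
    set P : ℝ := Real.sqrt (x ^ 2 * y ^ 2 - d ^ 2) with hPdef
    have hP0 : 0 ≤ P := Real.sqrt_nonneg _
    have hP2 : P ^ 2 = x ^ 2 * y ^ 2 - d ^ 2 := Real.sq_sqrt (by nlinarith)
    clear_value P
    by_cases hcase : d ≤ e * P
    · exact ht2.trans hcase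
    · push_neg at hcase
      have haux3 : d ^ 2 * w ^ 2 = d ^ 2 * (1 + e ^ 2) := by rw [hw2]
      have hdw : e * (x * y) < d * w := by
        have h5 : (e * P) ^ 2 < d ^ 2 := by
          have : 0 ≤ e * P := by positivity
          nlinarith
        have h6 : (e * (x * y)) ^ 2 < (d * w) ^ 2 := by nlinarith
        exact lt_of_pow_lt_pow_left₀ 2 (by positivity) h6
      have haux1 : w ^ 2 * (x * y) = (1 + e ^ 2) * (x * y) := by rw [hw2]
      have haux2 : w ^ 2 * d = (1 + e ^ 2) * d := by rw [hw2]
      have h7 : e * (x * y) * (e + w) < d * w * (e + w) := by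
        exact mul_lt_mul_of_pos_right hdw hew
      have hfac : 0 ≤ (x * y + d) - (e + w) ^ 2 * (x * y - d) := by
        nlinarith [h7, haux1, haux2]
      have hsq : ((e + w) * (x * y - d)) ^ 2 ≤ P ^ 2 := by
        nlinarith [mul_nonneg (by nlinarith : (0:ℝ) ≤ x * y - d) hfac]
      have hz0 : 0 ≤ (e + w) * (x * y - d) := by nlinarith
      have hle : (e + w) * (x * y - d) ≤ P := by
        calc (e + w) * (x * y - d) = Real.sqrt (((e + w) * (x * y - d)) ^ 2) :=
              (Real.sqrt_sq hz0).symm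
          _ ≤ Real.sqrt (P ^ 2) := Real.sqrt_le_sqrt hsq
          _ = P := Real.sqrt_sq hP0
      calc t ≤ e * (e + w) * (x * y - d) := step1
        _ = e * ((e + w) * (x * y - d)) := by ring
        _ ≤ e * P := mul_le_mul_of_nonneg_left hle he0.le
  · -- branch 2
    rw [show e * ((1 + e) / (x * y) * (x ^ 2 * y ^ 2 - d ^ 2))
      = e * (1 + e) * (x ^ 2 * y ^ 2 - d ^ 2) / (x * y) by ring]
    rw [le_div_iff₀ hxy]
    by_cases hc2 : (e + w) * (x * y) ≤ (1 + e) * (x * y + d)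
    · have c1 : t * (x * y) ≤ e * (e + w) * (x * y - d) * (x * y) :=
        mul_le_mul_of_nonneg_right step1 hxy.le
      have c2 : e * (x * y - d) * ((e + w) * (x * y)) ≤
          e * (x * y - d) * ((1 + e) * (x * y + d)) :=
        mul_le_mul_of_nonneg_left hc2 (mul_nonneg he0.le (by nlinarith))
      nlinarith [c1, c2]
    · push_neg at hc2
      have hd_small : (1 + e) * d < (w - 1) * (x * y) := by nlinarith
      have hw1e : (w - 1) * (w + 1) = e ^ 2 := by nlinarith
      have hwb : w - 1 ≤ e ^ 2 / 2 := by nlinarith [sq_nonneg (w - 1)]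
      have h8 : 2 * (1 + e) * d ≤ e ^ 2 * (x * y) := by
        linarith [hd_small, mul_le_mul_of_nonneg_right hwb hxy.le]
      have h9 : d ≤ x * y / 4 := by
        have k1 : 4 * e ^ 2 ≤ 2 * (1 + e) := by nlinarith
        have k2 : 4 * e ^ 2 * (x * y) ≤ 2 * (1 + e) * (x * y) :=
          mul_le_mul_of_nonneg_right k1 hxy.le
        have k3 : (1 + e) * (8 * d) ≤ (1 + e) * (2 * (x * y)) := by nlinarith [h8, k2, hxy]
        have k4 := le_of_mul_le_mul_left k3 (by linarith : (0:ℝ) < 1 + e)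
        linarith
      have hsq16 : d ^ 2 ≤ x ^ 2 * y ^ 2 / 16 := by
        nlinarith [mul_le_mul h9 h9 hd0 (by positivity : (0:ℝ) ≤ x * y / 4)]
      have h10 : 2 * (1 + e) * (d * (x * y)) ≤ e ^ 2 * (x ^ 2 * y ^ 2) := by
        nlinarith [mul_le_mul_of_nonneg_right h8 hxy.le, hxy]
      have hX2D : x ^ 2 * y ^ 2 ≤ 2 * (1 + e) ^ 2 * (x ^ 2 * y ^ 2 - d ^ 2) := by
        nlinarith [mul_nonneg (by nlinarith : (0:ℝ) ≤ (1 + e) ^ 2 - 1)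
          (by nlinarith : (0:ℝ) ≤ x ^ 2 * y ^ 2 - d ^ 2), hsq16]
      have h11 : e ^ 2 * (x ^ 2 * y ^ 2) ≤ 2 * (1 + e) * (e * (1 + e) * (x ^ 2 * y ^ 2 - d ^ 2)) := by
        have i1 : e ^ 2 * (x ^ 2 * y ^ 2) ≤ e * (x ^ 2 * y ^ 2) := by
          nlinarith [mul_nonneg (mul_nonneg (by linarith : (0:ℝ) ≤ 1 - e) he0.le)
            (sq_nonneg (x * y))]
        have i2 : e * (x ^ 2 * y ^ 2) ≤ e * (2 * (1 + e) ^ 2 * (x ^ 2 * y ^ 2 - d ^ 2)) :=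
          mul_le_mul_of_nonneg_left hX2D he0.le
        nlinarith [i1, i2]
      have hfin : 2 * (1 + e) * (t * (x * y)) ≤
          2 * (1 + e) * (e * (1 + e) * (x ^ 2 * y ^ 2 - d ^ 2)) := by
        have : t * (x * y) ≤ d * (x * y) := mul_le_mul_of_nonneg_right ht2 hxy.le
        nlinarith [h10, h11]
      have hpos : (0:ℝ) < 2 * (1 + e) := by linarith
      exact le_of_mul_le_mul_left hfin hpos



lemma frob_sq {m n : ℕ} (M : Matrix (Fin m) (Fin n) ℝ) : frob M ^ 2 = ∑ i, ∑ j, M i j ^ 2 :=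
  Real.sq_sqrt (Finset.sum_nonneg fun _ _ => Finset.sum_nonneg fun _ _ => sq_nonneg _)

lemma frob_pos {m n : ℕ} {M : Matrix (Fin m) (Fin n) ℝ} (hM : M ≠ 0) : 0 < frob M := by
  obtain ⟨i, j, hij⟩ : ∃ i j, M i j ≠ 0 := by
    by_contra h
    push_neg at h
    exact hM (by ext i j; simpa using h i j)
  apply Real.sqrt_pos.mpr
  calc (0:ℝ) < M i j ^ 2 := by positivity
    _ ≤ ∑ j', M i j' ^ 2 := Finset.single_le_sum (f := fun j' => M i j' ^ 2)
          (fun _ _ => sq_nonneg _) (Finset.mem_univ j)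
    _ ≤ ∑ i', ∑ j', M i' j' ^ 2 :=
        Finset.single_le_sum (f := fun i' => ∑ j', M i' j' ^ 2)
          (fun _ _ => Finset.sum_nonneg fun _ _ => sq_nonneg _) (Finset.mem_univ i)

set_option maxHeartbeats 1000000 in
/-- nuclear-norm loss of the hard thresholding step. -/
theorem statement16
    (p r s s' : ℕ) (hss' : s ≤ s') (hs'p : s' ≤ p)
    (V W Wb : Matrix (Fin p) (Fin r) ℝ)
    (hVs : (rowSupport V).ncard ≤ s) (hV0 : V ≠ 0) (hW0 : W ≠ 0)
    (hWb : IsHT W s' Wb) :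
    nucNorm (Vᵀ * W) - nucNorm (Vᵀ * Wb) ≤
      Real.sqrt ((s : ℝ) / s') *
        min (Real.sqrt (frob V ^ 2 * frob W ^ 2 - nucNorm (Vᵀ * W) ^ 2))
          ((1 + Real.sqrt ((s : ℝ) / s')) / (frob V * frob W) *
            (frob V ^ 2 * frob W ^ 2 - nucNorm (Vᵀ * W) ^ 2)) := by
  classical
  obtain ⟨C, hCcard0, hCeq, hCzero, hCmax⟩ := hWb
  have hCcard : C.card = s' := by rw [hCcard0, Nat.min_eq_left hs'p]
  set x := frob V with hxdef
  set y := frob W with hydef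
  set d := nucNorm (Vᵀ * W) with hddef
  set db := nucNorm (Vᵀ * Wb) with hdbdef
  set e := Real.sqrt ((s : ℝ) / s') with hedef
  have hfrobV : x ^ 2 = ∑ i, ∑ j, V i j ^ 2 := frob_sq V
  have hfrobW : y ^ 2 = ∑ i, ∑ j, W i j ^ 2 := frob_sq W
  have hx : 0 < x := frob_pos hV0
  have hy : 0 < y := frob_pos hW0
  -- support finset
  set Sf : Finset (Fin p) := Finset.univ.filter (fun i => V i ≠ 0) with hSfdef
  have hSfmem : ∀ i, i ∈ Sf ↔ V i ≠ 0 := by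
    intro i; simp [hSfdef]
  have hSfcard : Sf.card ≤ s := by
    have h1 : rowSupport V = ↑Sf := by
      ext i; simp [rowSupport, hSfdef]
    rw [h1, Set.ncard_coe_finset] at hVs
    exact hVs
  have hVex : ∃ i, V i ≠ 0 := by
    by_contra h
    push_neg at h
    exact hV0 (by ext i j; have := congrFun (h i) j; simpa using this)
  have hs1 : 1 ≤ s := by
    obtain ⟨i, hi⟩ := hVex
    have : 0 < Sf.card := Finset.card_pos.mpr ⟨i, (hSfmem i).mpr hi⟩
    omega
  have hs'1 : 1 ≤ s' := le_trans hs1 hss'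
  have he2 : e ^ 2 = (s : ℝ) / s' := Real.sq_sqrt (by positivity)
  have he0 : 0 < e := Real.sqrt_pos.mpr (by
    apply div_pos
    · exact_mod_cast hs1
    · exact_mod_cast hs'1)
  have he1 : e ≤ 1 := by
    rw [hedef]
    rw [show (1:ℝ) = Real.sqrt 1 by simp]
    apply Real.sqrt_le_sqrt
    rw [div_le_one (by exact_mod_cast hs'1)]
    exact_mod_cast hss'
  -- dual certificate
  obtain ⟨Q, hQ1, hQ2, hQA⟩ := exists_dual_attain (Vᵀ * W)
  have hconv : ∀ Z : Matrix (Fin p) (Fin r) ℝ,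
      (Qᵀ * (Vᵀ * Z)).trace = ∑ i, ∑ j, (V * Q) i j * Z i j := by
    intro Z
    rw [← traceTmul (V * Q) Z]
    congr 1
    rw [transpose_mul, Matrix.mul_assoc]
  have hGW : ∑ i, ∑ j, (V * Q) i j * W i j = d := by rw [← hconv W]; exact hQA
  have hGWb : ∑ i, ∑ j, (V * Q) i j * Wb i j ≤ db := by
    rw [← hconv Wb]; exact trace_orth_le_nucNorm (Vᵀ * Wb) Q hQ1
  have hGnorm : ∑ i, ∑ j, (V * Q) i j ^ 2 = x ^ 2 := by
    have h1 : ∑ i, ∑ j, (V * Q) i j ^ 2 = ((V * Q)ᵀ * (V * Q)).trace := by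
      rw [traceTmul]
      exact Finset.sum_congr rfl fun i _ => Finset.sum_congr rfl fun j _ => by ring
    have h2 : ((V * Q)ᵀ * (V * Q)).trace = (Vᵀ * V).trace := by
      rw [transpose_mul]
      have h3 : Qᵀ * Vᵀ * (V * Q) = Qᵀ * ((Vᵀ * V) * Q) := by simp only [Matrix.mul_assoc]
      rw [h3, Matrix.trace_mul_comm, Matrix.mul_assoc, hQ2, Matrix.mul_one]
    have h4 : (Vᵀ * V).trace = ∑ i, ∑ j, V i j ^ 2 := by
      rw [traceTmul]
      exact Finset.sum_congr rfl fun i _ => Finset.sum_congr rfl fun j _ => by ring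
    rw [h1, h2, h4, ← hfrobV]
  have hGz : ∀ i, i ∉ Sf → ∀ j, (V * Q) i j = 0 := by
    intro i hi j
    have hVi : V i = 0 := by
      by_contra hne
      exact hi ((hSfmem i).mpr hne)
    rw [Matrix.mul_apply]
    apply Finset.sum_eq_zero
    intro k _
    have hv : V i k = 0 := by simpa using congrFun hVi k
    rw [hv, zero_mul]
  have hd0 : 0 ≤ d := nucNorm_nonneg _
  have hdb0 : 0 ≤ db := nucNorm_nonneg _
  have hdxy : d ≤ x * y := by
    calc d = ∑ i, ∑ j, (V * Q) i j * W i j := hGW.symm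
      _ ≤ Real.sqrt (∑ i, ∑ j, (V * Q) i j ^ 2) * Real.sqrt (∑ i, ∑ j, W i j ^ 2) :=
          frobCS Finset.univ (V * Q) W
      _ = x * y := by rw [hGnorm, ← hfrobW, Real.sqrt_sq hx.le, Real.sqrt_sq hy.le]
  -- row sets
  set K := Sf \ C with hKdef
  set L := C \ Sf with hLdef
  set g2 := ∑ i ∈ K, ∑ j, W i j ^ 2 with hg2def
  set d2sq := ∑ i ∈ L, ∑ j, W i j ^ 2 with hd2def
  have hg20 : 0 ≤ g2 := Finset.sum_nonneg fun _ _ => Finset.sum_nonneg fun _ _ => sq_nonneg _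
  have hd2sq0 : 0 ≤ d2sq := Finset.sum_nonneg fun _ _ => Finset.sum_nonneg fun _ _ => sq_nonneg _
  -- row norms monotone
  have hmono : ∀ i ∈ C, ∀ j ∉ C, (∑ m, W j m ^ 2) ≤ ∑ m, W i m ^ 2 := by
    intro i hi j hj
    have hr : rowNorm W j ≤ rowNorm W i := by
      rcases hCmax i hi j hj with h | h
      · exact le_of_lt h
      · exact le_of_eq h.1
    have hj2 : rowNorm W j ^ 2 = ∑ m, W j m ^ 2 :=
      Real.sq_sqrt (Finset.sum_nonneg fun _ _ => sq_nonneg _)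
    have hi2 : rowNorm W i ^ 2 = ∑ m, W i m ^ 2 :=
      Real.sq_sqrt (Finset.sum_nonneg fun _ _ => sq_nonneg _)
    rw [← hj2, ← hi2]
    exact pow_le_pow_left₀ (Real.sqrt_nonneg _) hr 2
  -- hard-thresholding bound : s' * g2 ≤ s * d2sq
  have hHT : (s' : ℝ) * g2 ≤ (s : ℝ) * d2sq := by
    rcases Finset.eq_empty_or_nonempty K with hKe | hKne
    · have hz : g2 = 0 := by rw [hg2def, hKe, Finset.sum_empty]
      rw [hz, mul_zero]
      have : (0:ℝ) ≤ (s:ℝ) := by positivity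
      exact mul_nonneg this hd2sq0
    · have hk1 : 1 ≤ K.card := Finset.card_pos.mpr hKne
      have hcount1 : K.card + (Sf ∩ C).card = Sf.card :=
        Finset.card_sdiff_add_card_inter Sf C
      have hcount2 : L.card + (C ∩ Sf).card = C.card :=
        Finset.card_sdiff_add_card_inter C Sf
      have hintc : (Sf ∩ C).card = (C ∩ Sf).card := by rw [Finset.inter_comm]
      have hknat : K.card ≤ s := le_trans (Finset.card_le_card (Finset.sdiff_subset)) hSfcard
      have hAB : s' + K.card ≤ L.card + s := by omega
      have hdc : (L.card : ℝ) * g2 ≤ (K.card : ℝ) * d2sq := by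
        have h1 : ∀ j ∈ L, g2 ≤ (K.card : ℝ) * ∑ m, W j m ^ 2 := by
          intro j hj
          have hjC : j ∈ C := (Finset.mem_sdiff.mp hj).1
          calc g2 ≤ ∑ i ∈ K, ∑ m, W j m ^ 2 := by
                rw [hg2def]
                exact Finset.sum_le_sum fun i hi =>
                  hmono j hjC i (Finset.mem_sdiff.mp hi).2
            _ = (K.card : ℝ) * ∑ m, W j m ^ 2 := by
                rw [Finset.sum_const, nsmul_eq_mul]
        calc (L.card : ℝ) * g2 = ∑ j ∈ L, g2 := by rw [Finset.sum_const, nsmul_eq_mul]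
          _ ≤ ∑ j ∈ L, (K.card : ℝ) * ∑ m, W j m ^ 2 := Finset.sum_le_sum h1
          _ = (K.card : ℝ) * d2sq := by rw [← Finset.mul_sum, hd2def]
      have hckn : K.card ≤ L.card := by omega
      have hck : (K.card : ℝ) ≤ (L.card : ℝ) := by exact_mod_cast hckn
      have hc0 : (0:ℝ) < (L.card : ℝ) := by
        have : 1 ≤ L.card := le_trans hk1 hckn
        exact_mod_cast this
      have hg2d2 : g2 ≤ d2sq := by
        nlinarith [hdc, mul_le_mul_of_nonneg_right hck hd2sq0]
      have hcast1 : (s' : ℝ) + (K.card : ℝ) ≤ (L.card : ℝ) + (s : ℝ) := by exact_mod_cast hAB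
      have hcast2 : (K.card : ℝ) ≤ (s : ℝ) := by exact_mod_cast hknat
      nlinarith [hdc, mul_nonneg (by linarith : (0:ℝ) ≤ (s:ℝ) - (K.card:ℝ))
        (by linarith : (0:ℝ) ≤ d2sq - g2)]
  -- the rescaled matrix M
  set Mm : Matrix (Fin p) (Fin r) ℝ := Matrix.of (fun i j => y / x * (V * Q) i j) with hMmdef
  have hMmapp : ∀ i j, Mm i j = y / x * (V * Q) i j := fun i j => rfl
  have hxne : x ≠ 0 := ne_of_gt hx
  have hyne : y ≠ 0 := ne_of_gt hy
  have hMW : ∑ i, ∑ j, Mm i j * W i j = y / x * d := by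
    rw [← hGW]
    simp_rw [hMmapp, mul_assoc, ← Finset.mul_sum]
  have hM2 : ∑ i, ∑ j, Mm i j ^ 2 = y ^ 2 := by
    have h1 : ∑ i, ∑ j, Mm i j ^ 2 = (y / x) ^ 2 * ∑ i, ∑ j, (V * Q) i j ^ 2 := by
      rw [Finset.mul_sum]
      apply Finset.sum_congr rfl; intro i _
      rw [Finset.mul_sum]
      apply Finset.sum_congr rfl; intro j _
      rw [hMmapp]; ring
    rw [h1, hGnorm]
    field_simp
  set d1sq := ∑ i ∈ K, ∑ j, (Mm i j - W i j) ^ 2 with hd1def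
  have hd1sq0 : 0 ≤ d1sq := Finset.sum_nonneg fun _ _ => Finset.sum_nonneg fun _ _ => sq_nonneg _
  -- total error bound
  have htot : ∑ i, ∑ j, (Mm i j - W i j) ^ 2 = 2 * y ^ 2 - 2 * y * d / x := by
    have h1 : ∑ i, ∑ j, (Mm i j - W i j) ^ 2
        = (∑ i, ∑ j, Mm i j ^ 2) - 2 * (∑ i, ∑ j, Mm i j * W i j) + ∑ i, ∑ j, W i j ^ 2 := by
      rw [Finset.mul_sum, ← Finset.sum_sub_distrib, ← Finset.sum_add_distrib]
      apply Finset.sum_congr rfl; intro i _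
      rw [Finset.mul_sum, ← Finset.sum_sub_distrib, ← Finset.sum_add_distrib]
      apply Finset.sum_congr rfl; intro j _
      ring
    rw [h1, hM2, hMW, ← hfrobW]
    field_simp
    ring
  have hLsum : ∑ i ∈ L, ∑ j, (Mm i j - W i j) ^ 2 = d2sq := by
    rw [hd2def]
    apply Finset.sum_congr rfl
    intro i hi
    have hiS : i ∉ Sf := (Finset.mem_sdiff.mp hi).2
    apply Finset.sum_congr rfl
    intro j _
    rw [hMmapp, hGz i hiS j, mul_zero, zero_sub, neg_sq]
  have hd12 : d1sq + d2sq ≤ 2 * y ^ 2 - 2 * y * d / x := by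
    have hdisj : Disjoint K L := by
      rw [Finset.disjoint_left]
      intro i hiK hiL
      exact (Finset.mem_sdiff.mp hiL).2 (Finset.mem_sdiff.mp hiK).1
    have hsub : d1sq + d2sq = ∑ i ∈ K ∪ L, ∑ j, (Mm i j - W i j) ^ 2 := by
      rw [Finset.sum_union hdisj, hd1def, hLsum]
    have hle : ∑ i ∈ K ∪ L, ∑ j, (Mm i j - W i j) ^ 2
        ≤ ∑ i, ∑ j, (Mm i j - W i j) ^ 2 :=
      Finset.sum_le_sum_of_subset_of_nonneg (Finset.subset_univ _)
        (fun i _ _ => Finset.sum_nonneg fun _ _ => sq_nonneg _)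
    rw [hsub, ← htot]
    exact hle
  -- main chain : d - db ≤ T0
  have ht_main : d - db ≤ ∑ i ∈ K, ∑ j, (V * Q) i j * W i j := by
    have step : (∑ i, ∑ j, (V * Q) i j * W i j) - (∑ i, ∑ j, (V * Q) i j * Wb i j)
        = ∑ i ∈ K, ∑ j, (V * Q) i j * W i j := by
      rw [← Finset.sum_sub_distrib]
      have hrow : ∀ i, ((∑ j, (V * Q) i j * W i j) - ∑ j, (V * Q) i j * Wb i j)
          = if i ∈ K then ∑ j, (V * Q) i j * W i j else 0 := by
        intro i
        by_cases hiC : i ∈ C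
        · have hwb : ∀ j, Wb i j = W i j := fun j => congrFun (hCeq i hiC) j
          have hiK : i ∉ K := fun hiK => (Finset.mem_sdiff.mp hiK).2 hiC
          rw [if_neg hiK]
          simp_rw [hwb]
          ring
        · have hb0 : ∀ j, Wb i j = 0 := fun j => congrFun (hCzero i hiC) j
          by_cases hiS : i ∈ Sf
          · have hiK : i ∈ K := Finset.mem_sdiff.mpr ⟨hiS, hiC⟩
            rw [if_pos hiK]
            simp_rw [hb0, mul_zero]
            simp
          · have hiK : i ∉ K := fun hiK => hiS (Finset.mem_sdiff.mp hiK).1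
            rw [if_neg hiK]
            simp_rw [hb0, mul_zero, hGz i hiS, zero_mul]
            simp
      rw [Finset.sum_congr rfl fun i _ => hrow i, Finset.sum_ite_mem, Finset.univ_inter]
    have h5 : d - db ≤ (∑ i, ∑ j, (V * Q) i j * W i j) - ∑ i, ∑ j, (V * Q) i j * Wb i j := by
      rw [hGW]
      linarith [hGWb]
    linarith [h5, step.le]
  -- T0 ≤ (x/y)(g2 + sqrt d1sq * sqrt g2)
  have ht1 : d - db ≤ x / y * (g2 + Real.sqrt d1sq * Real.sqrt g2) := by
    have e1 : ∑ i ∈ K, ∑ j, (V * Q) i j * W i j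
        = x / y * ∑ i ∈ K, ∑ j, Mm i j * W i j := by
      rw [Finset.mul_sum]
      apply Finset.sum_congr rfl; intro i _
      rw [Finset.mul_sum]
      apply Finset.sum_congr rfl; intro j _
      rw [hMmapp]
      field_simp
    have e2 : ∑ i ∈ K, ∑ j, Mm i j * W i j
        = g2 + ∑ i ∈ K, ∑ j, (Mm i j - W i j) * W i j := by
      rw [hg2def, ← Finset.sum_add_distrib]
      apply Finset.sum_congr rfl; intro i _
      rw [← Finset.sum_add_distrib]
      apply Finset.sum_congr rfl; intro j _
      ring
    have e3 : ∑ i ∈ K, ∑ j, (Mm i j - W i j) * W i j ≤ Real.sqrt d1sq * Real.sqrt g2 := by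
      have := frobCS K (Matrix.of fun i j => Mm i j - W i j) W
      simpa [hd1def, hg2def] using this
    have e4 : ∑ i ∈ K, ∑ j, Mm i j * W i j ≤ g2 + Real.sqrt d1sq * Real.sqrt g2 := by
      rw [e2]; linarith
    calc d - db ≤ ∑ i ∈ K, ∑ j, (V * Q) i j * W i j := ht_main
      _ = x / y * ∑ i ∈ K, ∑ j, Mm i j * W i j := e1
      _ ≤ x / y * (g2 + Real.sqrt d1sq * Real.sqrt g2) :=
          mul_le_mul_of_nonneg_left e4 (by positivity)
  -- scalar endgame
  have hgsq : Real.sqrt g2 ^ 2 = g2 := Real.sq_sqrt hg20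
  have hd1s : Real.sqrt d1sq ^ 2 = d1sq := Real.sq_sqrt hd1sq0
  have hd2s : Real.sqrt d2sq ^ 2 = d2sq := Real.sq_sqrt hd2sq0
  have hgd2 : Real.sqrt g2 ≤ e * Real.sqrt d2sq := by
    have h1 : g2 ≤ e ^ 2 * d2sq := by
      rw [he2]
      rw [div_mul_eq_mul_div, le_div_iff₀ (by exact_mod_cast hs'1 : (0:ℝ) < (s':ℝ))]
      linarith [hHT]
    calc Real.sqrt g2 ≤ Real.sqrt (e ^ 2 * d2sq) := Real.sqrt_le_sqrt h1
      _ = e * Real.sqrt d2sq := by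
          rw [Real.sqrt_mul (sq_nonneg e), Real.sqrt_sq he0.le]
  have hmain := scalar_main x y d (d - db) e (Real.sqrt g2) (Real.sqrt d1sq) (Real.sqrt d2sq)
    hx hy he0 he1 hd0 hdxy (Real.sqrt_nonneg _) (Real.sqrt_nonneg _) (Real.sqrt_nonneg _)
    (by rw [hgsq]; exact ht1) (by linarith) hgd2 (by rw [hd1s, hd2s]; exact hd12)
  obtain ⟨hb1, hb2⟩ := hmain
  rcases le_total (Real.sqrt (x ^ 2 * y ^ 2 - d ^ 2))
      ((1 + e) / (x * y) * (x ^ 2 * y ^ 2 - d ^ 2)) with hmm | hmm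
  · rw [min_eq_left hmm]; exact hb1
  · rw [min_eq_right hmm]; exact hb2


end
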